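/- In ZF: let T₁ be the theory of dense linear orders without endpoints with constants c_n satisfying c_n < c_{n+1}, and p(x) = {c_n < x : n < ω}. If T₁ has a model with universe X in which some element is the <-least element realizing p(x), then T₁ has a model with universe X that omits p(x) (no element is above all constants). -/

import Mathlib

open FirstOrder Language

/-- The vocabulary of the Ehrenfeucht example: the order symbol together with
constants `c_n` for `n < ω`. -/
abbrev EL : FirstOrder.Language := Language.order[[ℕ]]

instance : IsOrdered EL := ⟨Sum.inl leSymb⟩

/-- The constant `c_n`, as a closed term. -/
def cT (n : ℕ) : EL.Term (Empty ⊕ Fin 0) := Constants.term (Language.order.con n)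

/-- The Ehrenfeucht theory `T₁`: dense linear order without endpoints together with the
axioms `c_n < c_{n+1}` for all `n < ω`. -/
def T1 : EL.Theory :=
  (LHom.sumInl.onTheory Language.order.dlo) ∪
    Set.range (fun n : ℕ => (Term.lt (cT n) (cT (n + 1)) : EL.Sentence))

section
variable {X : Type*}

/-- The interpretation of `≤` in a structure `S` on `X`. -/
def Ele (S : EL.Structure X) (a b : X) : Prop :=
  @Structure.RelMap EL X S 2 (Sum.inl leSymb) ![a, b]

/-- The interpretation of `<` in a structure `S` on `X`. -/
def Elt (S : EL.Structure X) (a b : X) : Prop := Ele S a b ∧ a ≠ b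

/-- The interpretation of the constant `c_n` in a structure `S` on `X`. -/
def Econ (S : EL.Structure X) (n : ℕ) : X :=
  @Structure.funMap EL X S 0 (Language.order.con n) ![]

/-- `a` realizes the type `p(x) = {c_n < x : n < ω}` in the structure `S`. -/
def RealizesP (S : EL.Structure X) (a : X) : Prop := ∀ n : ℕ, Elt S (Econ S n) a

end

/-! ### Auxiliary order-theoretic development -/

section NewOrder
variable {X : Type*} [LinearOrder X] (a : X)

/-- The swapped ordering: the part `≥ a` reversed, placed below the part `< a`. -/
def nlt (x y : X) : Prop :=
  (x < a ∧ y < a ∧ x < y) ∨ (¬ x < a ∧ ¬ y < a ∧ y < x) ∨ (¬ x < a ∧ y < a)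

variable {a}

lemma nlt_irrefl (x : X) : ¬ nlt a x x := by simp [nlt, lt_irrefl]

lemma nlt_trans {x y z : X} (h1 : nlt a x y) (h2 : nlt a y z) : nlt a x z := by
  by_cases hx : x < a <;> by_cases hy : y < a <;> by_cases hz : z < a <;>
    simp_all [nlt] <;>
    first
      | exact h1.trans h2
      | exact Or.inr (Or.inl (h2.trans h1))

lemma nlt_trichot (x y : X) : nlt a x y ∨ x = y ∨ nlt a y x := by
  by_cases hx : x < a <;> by_cases hy : y < a <;> simp_all [nlt] <;>
    rcases lt_trichotomy x y with h | h | h <;> tauto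

instance nlt_sto : IsStrictTotalOrder X (nlt a) where
  trichotomous x y := fun h1 h2 => ((nlt_trichot x y).resolve_left h1).resolve_right h2
  irrefl := nlt_irrefl
  trans _ _ _ := nlt_trans

/-- The new linear order obtained by cutting at `a` and swapping. -/
noncomputable def newOrder (a : X) : LinearOrder X :=
  @linearOrderOfSTO X (nlt a) nlt_sto (Classical.decRel _)

lemma newOrder_le {x y : X} : (newOrder a).le x y ↔ x = y ∨ nlt a x y := Iff.rfl

lemma newOrder_lt {x y : X} : (newOrder a).lt x y ↔ nlt a x y := Iff.rfl

/-- The `Preorder` underlying `newOrder`. -/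
noncomputable abbrev newPre (a : X) : Preorder X :=
  @PartialOrder.toPreorder X (@LinearOrder.toPartialOrder X (newOrder a))

/-- The `LE` underlying `newOrder`. -/
noncomputable abbrev newLEi (a : X) : LE X := @Preorder.toLE X (newPre a)

/-- The `LT` underlying `newOrder`. -/
noncomputable abbrev newLTi (a : X) : LT X := @Preorder.toLT X (newPre a)

lemma nlt_dense [DenselyOrdered X] [NoBotOrder X] {x y : X} (h : nlt a x y) :
    ∃ z, nlt a x z ∧ nlt a z y := by
  rcases h with ⟨hx, hy, hxy⟩ | ⟨hx, hy, hyx⟩ | ⟨hx, hy⟩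
  · obtain ⟨z, hz1, hz2⟩ := exists_between hxy
    exact ⟨z, Or.inl ⟨hx, hz2.trans hy, hz1⟩, Or.inl ⟨hz2.trans hy, hy, hz2⟩⟩
  · obtain ⟨z, hz1, hz2⟩ := exists_between hyx
    have hz : ¬ z < a := fun h => hy (hz1.trans h)
    exact ⟨z, Or.inr (Or.inl ⟨hx, hz, hz2⟩), Or.inr (Or.inl ⟨hz, hy, hz1⟩)⟩
  · obtain ⟨z, hz⟩ := exists_not_ge y
    have hzy : z < y := lt_of_not_ge hz
    exact ⟨z, Or.inr (Or.inr ⟨hx, hzy.trans hy⟩), Or.inl ⟨hzy.trans hy, hy, hzy⟩⟩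

lemma nlt_noTop [DenselyOrdered X] {e : ℕ → X} (he : ∀ n, e n < a)
    (hkey : ∀ x, x < a → ∃ n, x ≤ e n) (x : X) : ∃ y, nlt a x y := by
  by_cases hx : x < a
  · obtain ⟨n, hn⟩ := hkey x hx
    obtain ⟨z, hz⟩ := exists_between (he n)
    exact ⟨z, Or.inl ⟨hx, hz.2, hn.trans_lt hz.1⟩⟩
  · exact ⟨e 0, Or.inr (Or.inr ⟨hx, he 0⟩)⟩

lemma nlt_noBot [NoTopOrder X] (x : X) : ∃ y, nlt a y x := by
  by_cases hx : x < a
  · exact ⟨a, Or.inr (Or.inr ⟨lt_irrefl a, hx⟩)⟩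
  · obtain ⟨z, hz⟩ := exists_not_le x
    have hxz : x < z := lt_of_not_ge hz
    have hza : ¬ z < a := fun h => hx (hxz.trans h)
    exact ⟨z, Or.inr (Or.inl ⟨hza, hx, hxz⟩)⟩

lemma nlt_omit {e : ℕ → X} (he : ∀ n, e n < a)
    (hkey : ∀ x, x < a → ∃ n, x ≤ e n) (b : X) : ∃ n, ¬ nlt a (e n) b := by
  by_cases hb : b < a
  · obtain ⟨n, hn⟩ := hkey b hb
    refine ⟨n, ?_⟩
    rintro (⟨_, _, h⟩ | ⟨h, _, _⟩ | ⟨h, _⟩)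
    · exact absurd (hn.trans_lt h) (lt_irrefl b)
    · exact h (he n)
    · exact h (he n)
  · refine ⟨0, ?_⟩
    rintro (⟨_, h, _⟩ | ⟨h, _, _⟩ | ⟨_, h⟩)
    · exact hb h
    · exact h (he 0)
    · exact hb h

end NewOrder

lemma fin2_eta {X : Type*} (x : Fin 2 → X) : ![x 0, x 1] = x := by
  funext i; fin_cases i <;> rfl

section Build
variable {X : Type*}

/-- The `EL`-structure on an ordered type with chosen constants. -/
def buildS [LE X] (e : ℕ → X) : EL.Structure X :=
  letI : Language.order.Structure X := orderStructure X
  letI : (constantsOn ℕ).Structure X := constantsOn.structure e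
  Language.sumStructure _ _ X

lemma buildS_Ele [LE X] (e : ℕ → X) {x y : X} : Ele (buildS e) x y ↔ x ≤ y := Iff.rfl

lemma buildS_Econ [LE X] (e : ℕ → X) (n : ℕ) : Econ (buildS e) n = e n := rfl

lemma buildS_models [LinearOrder X] [DenselyOrdered X] [NoTopOrder X] [NoBotOrder X]
    (e : ℕ → X) (he : ∀ n, e n < e (n + 1)) :
    @Theory.Model EL X (buildS e) T1 := by
  letI : Language.order.Structure X := orderStructure X
  letI : (constantsOn ℕ).Structure X := constantsOn.structure e
  letI SS : EL.Structure X := Language.sumStructure Language.order (constantsOn ℕ) X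
  show @Theory.Model EL X SS T1
  haveI : Language.order.OrderedStructure X := ⟨fun x => Iff.rfl⟩
  haveI : EL.OrderedStructure X := ⟨fun x => Iff.rfl⟩
  erw [T1, Theory.model_union_iff]
  refine ⟨(LHom.onTheory_model LHom.sumInl Language.order.dlo).2 inferInstance, ?_⟩
  rw [Theory.model_iff]
  rintro φ ⟨n, rfl⟩
  simp only [Sentence.Realize, Formula.Realize, cT, Term.realize_lt, Term.realize_constants]
  exact he n

end Build

lemma exists_model_aux {X : Type*} [LinearOrder X] [DenselyOrdered X] [NoTopOrder X]
    [NoBotOrder X] (a : X) (e : ℕ → X) (he : ∀ n, e n < a) (hmono : ∀ n, e n < e (n + 1))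
    (hkey : ∀ x, x < a → ∃ n, x ≤ e n) :
    ∃ S : EL.Structure X, @Theory.Model EL X S T1 ∧ ∀ b : X, ¬ RealizesP S b := by
  have hdense : @DenselyOrdered X (newLTi a) :=
    @DenselyOrdered.mk X (newLTi a) (fun x y h => nlt_dense (a := a) h)
  have hnt : @NoTopOrder X (newLEi a) := by
    refine @NoTopOrder.mk X (newLEi a) (fun x => ?_)
    obtain ⟨y, hy⟩ := nlt_noTop (a := a) he hkey x
    refine ⟨y, fun hc => ?_⟩
    rcases (newOrder_le (a := a)).1 hc with rfl | hc'
    · exact nlt_irrefl _ hy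
    · exact nlt_irrefl _ (nlt_trans hy hc')
  have hnb : @NoBotOrder X (newLEi a) := by
    refine @NoBotOrder.mk X (newLEi a) (fun x => ?_)
    obtain ⟨y, hy⟩ := nlt_noBot (a := a) x
    refine ⟨y, fun hc => ?_⟩
    rcases (newOrder_le (a := a)).1 hc with rfl | hc'
    · exact nlt_irrefl _ hy
    · exact nlt_irrefl _ (nlt_trans hy hc')
  refine ⟨@buildS X (newLEi a) e,
    @buildS_models X (newOrder a) hdense hnt hnb e
      (fun n => (newOrder_lt (a := a)).2 (Or.inl ⟨he n, he (n + 1), hmono n⟩)), ?_⟩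
  intro b hb
  obtain ⟨n, hn⟩ := nlt_omit (a := a) he hkey b
  apply hn
  have h1 := (hb n).1
  have h2 := (hb n).2
  rw [Econ, show (@Structure.funMap EL X (@buildS X (newLEi a) e) 0
      (Language.order.con n) ![]) = e n from rfl] at h1 h2
  rw [Ele, show (@Structure.RelMap EL X (@buildS X (newLEi a) e) 2 (Sum.inl leSymb)
      ![e n, b]) = ((newOrder a).le (e n) b) from rfl] at h1
  rcases (newOrder_le (a := a)).1 h1 with heq | h'
  · exact absurd heq h2
  · exact h'

/-- (ZF) If `T₁` has a model with universe `X` in which some element is the `<`-least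
realization of `p(x) = {c_n < x : n < ω}`, then `T₁` has a model with universe `X` that
omits `p(x)`. -/
theorem exists_model_omitting_p (X : Type*)
    (h : ∃ S : EL.Structure X, @Theory.Model EL X S T1 ∧
      ∃ a : X, RealizesP S a ∧ ∀ b : X, RealizesP S b → Ele S a b) :
    ∃ S : EL.Structure X, @Theory.Model EL X S T1 ∧ ∀ a : X, ¬ RealizesP S a := by
  classical
  obtain ⟨S, hM, a, ha, hleast⟩ := h
  letI inst0 : EL.Structure X := S
  letI inst1 : (Language.order.sum (constantsOn ℕ)).Structure X := S
  haveI hM' : Theory.Model (L := EL) (M := X) T1 := hM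
  letI : Language.order.Structure X :=
    (LHom.sumInl : Language.order →ᴸ Language.order.sum (constantsOn ℕ)).reduct X
  haveI hexp : (LHom.sumInl :
      Language.order →ᴸ Language.order.sum (constantsOn ℕ)).IsExpansionOn X :=
    LHom.isExpansionOn_reduct _ X
  haveI hdlo : Theory.Model (L := Language.order) (M := X) Language.order.dlo :=
    (LHom.onTheory_model (M := X)
      (LHom.sumInl : Language.order →ᴸ Language.order.sum (constantsOn ℕ))
      Language.order.dlo).1 (hM'.mono Set.subset_union_left)
  letI lin : LinearOrder X :=
    @linearOrderOfModels Language.order X _ _ _ (Classical.decRel _)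
  have hle : ∀ x y : X, x ≤ y ↔ Ele S x y := fun x y => Iff.rfl
  haveI : Language.order.OrderedStructure X := ⟨fun x => by rw [← fin2_eta x]; exact Iff.rfl⟩
  haveI : EL.OrderedStructure X := ⟨fun x => by rw [← fin2_eta x]; exact Iff.rfl⟩
  haveI hdense : DenselyOrdered X := Language.order.denselyOrdered_of_dlo X
  haveI hnt : NoTopOrder X := Language.order.noTopOrder_of_dlo X
  haveI hnb : NoBotOrder X := Language.order.noBotOrder_of_dlo X
  set e : ℕ → X := Econ S with he_def
  have hElt : ∀ x y : X, Elt S x y ↔ x < y := by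
    intro x y
    rw [lt_iff_le_and_ne]
    exact Iff.rfl
  have he : ∀ n, e n < a := fun n => (hElt _ _).1 (ha n)
  have hkey : ∀ x, x < a → ∃ n, x ≤ e n := by
    intro x hx
    by_contra hc
    push_neg at hc
    have hr : RealizesP S x := fun n => (hElt _ _).2 (hc n)
    exact absurd hx (not_lt_of_ge ((hle a x).2 (hleast x hr)))
  have hmono : ∀ n, e n < e (n + 1) := by
    intro n
    have hmem : (Term.lt (cT n) (cT (n + 1)) : EL.Sentence) ∈ T1 :=
      Set.mem_union_right _ ⟨n, rfl⟩
    have := T1.realize_sentence_of_mem (M := X) hmem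
    simp only [Sentence.Realize, Formula.Realize, cT, Term.realize_lt,
      Term.realize_constants] at this
    convert this using 2 <;> simp [e, Econ, Structure.funMap, constantMap, Subsingleton.elim (![] : Fin 0 → X) default]
  exact exists_model_aux a e he hmono hkey
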